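/- For Z a standard normal random variable and any s > 0, E[Z²/(s + Z²)] = 1 − √(2πs) e^{s/2} Φ(−√s), where Φ is the standard normal CDF. -/

import Mathlib

open Real MeasureTheory Set


-- Lemma A: ∫ t in Ioi 0, exp (-(c*t)) = c⁻¹
lemma aux_exp_int {c : ℝ} (hc : 0 < c) :
    ∫ t in Ioi (0:ℝ), Real.exp (-(c * t)) = c⁻¹ := by
  have himg : (fun t => c * t) '' Ioi (0:ℝ) = Ioi 0 := by
    ext x
    constructor
    · rintro ⟨y, hy, rfl⟩; exact mul_pos hc hy
    · intro hx; exact ⟨x / c, div_pos hx hc, by field_simp⟩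
  have hderiv : ∀ x ∈ Ioi (0:ℝ), HasDerivWithinAt (fun t => c * t) c (Ioi 0) x := by
    intro x _
    simpa using ((hasDerivAt_id x).const_mul c).hasDerivWithinAt
  have hinj : InjOn (fun t => c * t) (Ioi 0) := fun a _ b _ h => by
    exact mul_left_cancel₀ hc.ne' h
  have := integral_image_eq_integral_abs_deriv_smul measurableSet_Ioi hderiv hinj
      (fun x => Real.exp (-x))
  rw [himg, integral_exp_neg_Ioi] at this
  simp only [smul_eq_mul, abs_of_pos hc, neg_zero, Real.exp_zero] at this
  rw [integral_const_mul] at this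
  field_simp at this ⊢
  linarith [this]

-- Lemma B: gaussian integral with formula exp(-(b*u^2))
lemma aux_gauss {b : ℝ} (hb : 0 < b) :
    ∫ u : ℝ, Real.exp (-(b * u ^ 2)) = Real.sqrt (π / b) := by
  simpa [neg_mul] using integral_gaussian b

-- inner gaussian: ∫ exp(-(t*u²)) * ((√(2π))⁻¹ exp(-(u²)/2)) du = (√(2t+1))⁻¹
lemma aux_inner {t : ℝ} (ht : 0 ≤ t) :
    ∫ u : ℝ, Real.exp (-(t * u ^ 2)) * ((Real.sqrt (2 * π))⁻¹ * Real.exp (-(u ^ 2) / 2))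
      = (Real.sqrt (2 * t + 1))⁻¹ := by
  have h1 : ∀ u : ℝ, Real.exp (-(t * u ^ 2)) * ((Real.sqrt (2 * π))⁻¹ * Real.exp (-(u ^ 2) / 2))
      = (Real.sqrt (2 * π))⁻¹ * Real.exp (-((t + 1/2) * u ^ 2)) := by
    intro u
    rw [mul_comm, mul_assoc, ← Real.exp_add]
    ring_nf
  simp_rw [h1]
  rw [integral_const_mul, aux_gauss (by linarith : (0:ℝ) < t + 1/2)]
  rw [← Real.sqrt_inv, ← Real.sqrt_mul (by positivity)]
  rw [← Real.sqrt_inv]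
  congr 1
  have hπ : (0:ℝ) < π := Real.pi_pos
  field_simp

lemma aux_sub1 {s : ℝ} (hs : 0 < s) :
    ∫ t in Ioi (0:ℝ), s * Real.exp (-(s * t)) * (Real.sqrt (2 * t + 1))⁻¹
      = ∫ v in Ioi (1:ℝ), s * Real.exp (s / 2) * Real.exp (-(s / 2 * v ^ 2)) := by
  have himg : (fun v : ℝ => (v ^ 2 - 1) / 2) '' Ioi 1 = Ioi 0 := by
    ext x
    constructor
    · rintro ⟨v, hv, rfl⟩
      have : (1:ℝ) < v := hv
      have : (1:ℝ) < v ^ 2 := by nlinarith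
      simp only [mem_Ioi]; linarith
    · intro hx
      refine ⟨Real.sqrt (2 * x + 1), ?_, ?_⟩
      · simp only [mem_Ioi]
        have : (1:ℝ) < 2 * x + 1 := by simp at hx; linarith
        nlinarith [Real.sq_sqrt (by linarith : (0:ℝ) ≤ 2 * x + 1),
          Real.sqrt_nonneg (2 * x + 1)]
      · have hx0 : (0:ℝ) < x := hx
        have h2 : Real.sqrt (2 * x + 1) ^ 2 = 2 * x + 1 :=
          Real.sq_sqrt (by linarith)
        simp only
        rw [h2]; ring
  have hderiv : ∀ v ∈ Ioi (1:ℝ),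
      HasDerivWithinAt (fun v : ℝ => (v ^ 2 - 1) / 2) v (Ioi 1) v := by
    intro v _
    have h := (((hasDerivAt_pow 2 v).sub_const 1).div_const 2).hasDerivWithinAt
      (s := Ioi (1:ℝ))
    norm_num at h
    exact h
  have hinj : InjOn (fun v : ℝ => (v ^ 2 - 1) / 2) (Ioi 1) := by
    intro a ha b hb h
    simp only [mem_Ioi] at ha hb
    have h2 : a ^ 2 = b ^ 2 := by simp only at h; linarith
    nlinarith
  have := integral_image_eq_integral_abs_deriv_smul measurableSet_Ioi hderiv hinj
      (fun t => s * Real.exp (-(s * t)) * (Real.sqrt (2 * t + 1))⁻¹)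
  rw [himg] at this
  rw [this]
  refine setIntegral_congr_fun measurableSet_Ioi (fun v hv => ?_)
  simp only [mem_Ioi] at hv
  have hv0 : (0:ℝ) < v := by linarith
  have h1 : 2 * ((v ^ 2 - 1) / 2) + 1 = v ^ 2 := by ring
  rw [smul_eq_mul, h1, Real.sqrt_sq hv0.le, abs_of_pos hv0]
  rw [show -(s * ((v ^ 2 - 1) / 2)) = s / 2 + -(s / 2 * v ^ 2) by ring, Real.exp_add]
  field_simp

lemma aux_sub2 {s : ℝ} (hs : 0 < s) :
    ∫ v in Ioi (1:ℝ), Real.exp (-(s / 2 * v ^ 2))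
      = (Real.sqrt s)⁻¹ * ∫ w in Ioi (Real.sqrt s), Real.exp (-(w ^ 2) / 2) := by
  have hss : (0:ℝ) < Real.sqrt s := Real.sqrt_pos.mpr hs
  have himg : (fun w : ℝ => w * (Real.sqrt s)⁻¹) '' Ioi (Real.sqrt s) = Ioi 1 := by
    ext x
    constructor
    · rintro ⟨w, hw, rfl⟩
      simp only [mem_Ioi] at hw ⊢
      rw [show w * (Real.sqrt s)⁻¹ = w / Real.sqrt s by ring, lt_div_iff₀ hss]
      linarith
    · intro hx
      refine ⟨x * Real.sqrt s, ?_, by field_simp⟩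
      simp only [mem_Ioi] at hx ⊢
      nlinarith
  have hderiv : ∀ w ∈ Ioi (Real.sqrt s),
      HasDerivWithinAt (fun w : ℝ => w * (Real.sqrt s)⁻¹) (Real.sqrt s)⁻¹
        (Ioi (Real.sqrt s)) w := by
    intro w _
    simpa using ((hasDerivAt_id w).mul_const (Real.sqrt s)⁻¹).hasDerivWithinAt
  have hinj : InjOn (fun w : ℝ => w * (Real.sqrt s)⁻¹) (Ioi (Real.sqrt s)) := by
    intro a _ b _ h
    exact mul_right_cancel₀ (inv_ne_zero hss.ne') h
  have := integral_image_eq_integral_abs_deriv_smul measurableSet_Ioi hderiv hinj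
      (fun v => Real.exp (-(s / 2 * v ^ 2)))
  rw [himg] at this
  rw [this, ← integral_const_mul]
  refine setIntegral_congr_fun measurableSet_Ioi (fun w hw => ?_)
  rw [smul_eq_mul, abs_of_pos (inv_pos.mpr hss)]
  congr 2
  · rw [mul_pow, inv_pow, Real.sq_sqrt hs.le]
    field_simp


lemma aux_merge (t u : ℝ) :
    Real.exp (-(t * u ^ 2)) * ((Real.sqrt (2 * π))⁻¹ * Real.exp (-(u ^ 2) / 2))
      = (Real.sqrt (2 * π))⁻¹ * Real.exp (-((t + 1/2) * u ^ 2)) := by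
  rw [mul_comm, mul_assoc, ← Real.exp_add]
  ring_nf

theorem gaussian_moment_identity (s : ℝ) (hs : 0 < s)
    (φ : ℝ → ℝ) (hφ : ∀ u : ℝ, φ u = (Real.sqrt (2 * Real.pi))⁻¹ * Real.exp (-(u ^ 2) / 2))
    (Φ : ℝ → ℝ) (hΦ : ∀ t : ℝ, Φ t = ∫ u in Set.Iic t, φ u) :
    ∫ u : ℝ, u ^ 2 / (s + u ^ 2) * φ u =
      1 - Real.sqrt (2 * Real.pi * s) * Real.exp (s / 2) * Φ (-Real.sqrt s) := by
  have hφf : φ = fun u : ℝ => (Real.sqrt (2 * π))⁻¹ * Real.exp (-(u ^ 2) / 2) := funext hφ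
  subst hφf
  have hπ : (0:ℝ) < π := Real.pi_pos
  have hsu : ∀ u : ℝ, 0 < s + u ^ 2 := fun u => by positivity
  -- integrability of the density
  have hφrw : (fun u : ℝ => (Real.sqrt (2 * π))⁻¹ * Real.exp (-(u ^ 2) / 2))
      = fun u : ℝ => (Real.sqrt (2 * π))⁻¹ * Real.exp (-(1/2 * u ^ 2)) := by
    funext u; rw [show -(u ^ 2) / 2 = -(1/2 * u ^ 2) by ring]
  have hφ_int : Integrable (fun u : ℝ => (Real.sqrt (2 * π))⁻¹ * Real.exp (-(u ^ 2) / 2)) := by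
    rw [hφrw]
    simpa [neg_mul] using (integrable_exp_neg_mul_sq (by norm_num : (0:ℝ) < 1/2)).const_mul
      (Real.sqrt (2 * π))⁻¹
  have hφ_tot : ∫ u : ℝ, (Real.sqrt (2 * π))⁻¹ * Real.exp (-(u ^ 2) / 2) = 1 := by
    rw [hφrw]
    rw [integral_const_mul]
    have : ∫ u : ℝ, Real.exp (-(1/2 * u ^ 2)) = Real.sqrt (π / (1/2)) := by
      simpa [neg_mul] using integral_gaussian (1/2 : ℝ)
    rw [this, show π / (1/2 : ℝ) = 2 * π by ring]
    exact inv_mul_cancel₀ (Real.sqrt_ne_zero'.mpr (by positivity))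
  -- continuity / integrability of the second piece
  have hcont : Continuous fun u : ℝ =>
      s / (s + u ^ 2) * ((Real.sqrt (2 * π))⁻¹ * Real.exp (-(u ^ 2) / 2)) := by
    apply Continuous.mul
    · exact continuous_const.div (by continuity) (fun u => (hsu u).ne')
    · continuity
  have hratio : ∀ u : ℝ, 0 ≤ s / (s + u ^ 2) ∧ s / (s + u ^ 2) ≤ 1 := by
    intro u
    constructor
    · positivity
    · rw [div_le_one (hsu u)]; nlinarith [sq_nonneg u]
  have hB_int : Integrable (fun u : ℝ =>
      s / (s + u ^ 2) * ((Real.sqrt (2 * π))⁻¹ * Real.exp (-(u ^ 2) / 2))) := by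
    apply hφ_int.mono hcont.aestronglyMeasurable
    refine ae_of_all _ fun u => ?_
    have h1 := hratio u
    have h2 : (0:ℝ) ≤ (Real.sqrt (2 * π))⁻¹ * Real.exp (-(u ^ 2) / 2) := by positivity
    rw [Real.norm_eq_abs, Real.norm_eq_abs, abs_of_nonneg (by positivity),
      abs_of_nonneg h2]
    nlinarith [h1.1, h1.2, h2]
  -- split the integral
  have hsplit : (fun u : ℝ => u ^ 2 / (s + u ^ 2) * ((Real.sqrt (2 * π))⁻¹ * Real.exp (-(u ^ 2) / 2)))
      = fun u : ℝ => ((Real.sqrt (2 * π))⁻¹ * Real.exp (-(u ^ 2) / 2))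
        - s / (s + u ^ 2) * ((Real.sqrt (2 * π))⁻¹ * Real.exp (-(u ^ 2) / 2)) := by
    funext u
    have h := (hsu u).ne'
    field_simp
    ring
  rw [hsplit, integral_sub hφ_int hB_int, hφ_tot]
  -- now compute B
  have hB : ∫ u : ℝ, s / (s + u ^ 2) * ((Real.sqrt (2 * π))⁻¹ * Real.exp (-(u ^ 2) / 2))
      = Real.sqrt (2 * π * s) * Real.exp (s / 2) * Φ (-Real.sqrt s) := by
      have hπ : (0:ℝ) < π := Real.pi_pos
      have hsu : ∀ u : ℝ, 0 < s + u ^ 2 := fun u => by positivity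
      -- canonical rewriting of the two-variable integrand
      have hre : ∀ t u : ℝ, s * Real.exp (-((s + u ^ 2) * t)) *
            ((Real.sqrt (2 * π))⁻¹ * Real.exp (-(u ^ 2) / 2))
          = (s * Real.exp (-(s * t))) *
            (Real.exp (-(t * u ^ 2)) * ((Real.sqrt (2 * π))⁻¹ * Real.exp (-(u ^ 2) / 2))) := by
        intro t u
        rw [show -((s + u ^ 2) * t) = -(s * t) + -(t * u ^ 2) by ring, Real.exp_add]
        ring
      have hslice : ∀ t : ℝ, 0 ≤ t → Integrable (fun u : ℝ =>
          s * Real.exp (-((s + u ^ 2) * t)) *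
            ((Real.sqrt (2 * π))⁻¹ * Real.exp (-(u ^ 2) / 2))) := by
        intro t ht
        simp_rw [hre, aux_merge]
        have h0 := integrable_exp_neg_mul_sq (show (0:ℝ) < t + 1/2 by linarith)
        rw [show (fun x : ℝ => Real.exp (-(t + 1/2) * x ^ 2))
            = fun x : ℝ => Real.exp (-((t + 1/2) * x ^ 2)) from by
            funext x; rw [neg_mul]] at h0
        exact (h0.const_mul _).const_mul _
      have hval : ∀ t : ℝ, 0 ≤ t → (∫ u : ℝ, s * Real.exp (-((s + u ^ 2) * t)) *
            ((Real.sqrt (2 * π))⁻¹ * Real.exp (-(u ^ 2) / 2)))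
          = s * Real.exp (-(s * t)) * (Real.sqrt (2 * t + 1))⁻¹ := by
        intro t ht
        simp_rw [hre]
        rw [integral_const_mul, aux_inner ht, mul_assoc]
      -- pointwise Laplace representation
      have key : ∀ u : ℝ, s / (s + u ^ 2) * ((Real.sqrt (2 * π))⁻¹ * Real.exp (-(u ^ 2) / 2))
          = ∫ t in Ioi (0:ℝ), s * Real.exp (-((s + u ^ 2) * t)) *
              ((Real.sqrt (2 * π))⁻¹ * Real.exp (-(u ^ 2) / 2)) := by
        intro u
        rw [show (∫ t in Ioi (0:ℝ), s * Real.exp (-((s + u ^ 2) * t)) *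
              ((Real.sqrt (2 * π))⁻¹ * Real.exp (-(u ^ 2) / 2)))
            = ∫ t in Ioi (0:ℝ), (s * ((Real.sqrt (2 * π))⁻¹ * Real.exp (-(u ^ 2) / 2))) *
              Real.exp (-((s + u ^ 2) * t)) from by congr 1; funext t; ring]
        rw [integral_const_mul, aux_exp_int (hsu u)]
        field_simp
      -- integrability on the product
      have hFc : Continuous (fun p : ℝ × ℝ => s * Real.exp (-((s + p.2 ^ 2) * p.1)) *
          ((Real.sqrt (2 * π))⁻¹ * Real.exp (-(p.2 ^ 2) / 2))) := by
        fun_prop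
      have hFint : Integrable (fun p : ℝ × ℝ => s * Real.exp (-((s + p.2 ^ 2) * p.1)) *
          ((Real.sqrt (2 * π))⁻¹ * Real.exp (-(p.2 ^ 2) / 2)))
          ((volume.restrict (Ioi 0)).prod volume) := by
        rw [integrable_prod_iff hFc.aestronglyMeasurable]
        constructor
        · refine (ae_restrict_iff' measurableSet_Ioi).mpr (ae_of_all _ fun t ht => ?_)
          exact hslice t (le_of_lt ht)
        · have htar : IntegrableOn (fun t : ℝ => s * Real.exp (-(s * t)) *
              (Real.sqrt (2 * t + 1))⁻¹) (Ioi 0) := by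
            have hg : IntegrableOn (fun t : ℝ => s * Real.exp (-(s * t))) (Ioi 0) := by
              have h := (exp_neg_integrableOn_Ioi 0 hs).const_mul s
              simp only [neg_mul] at h
              exact h
            apply Integrable.mono hg
            · apply Measurable.aestronglyMeasurable
              exact ((Real.measurable_exp.comp ((measurable_id.const_mul s).neg)).const_mul s).mul
                ((Real.continuous_sqrt.measurable.comp
                  ((measurable_id.const_mul 2).add measurable_const)).inv)
            · refine (ae_restrict_iff' measurableSet_Ioi).mpr (ae_of_all _ fun t ht => ?_)
              simp only [mem_Ioi] at ht
              have h1 : (1:ℝ) ≤ Real.sqrt (2 * t + 1) := by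
                nlinarith [Real.sq_sqrt (show (0:ℝ) ≤ 2 * t + 1 by linarith),
                  Real.sqrt_nonneg (2 * t + 1)]
              have h2 : (Real.sqrt (2 * t + 1))⁻¹ ≤ 1 := by
                rw [inv_le_one_iff₀]; right; exact h1
              have h3 : (0:ℝ) < Real.sqrt (2 * t + 1) := by linarith
              rw [Real.norm_eq_abs, Real.norm_eq_abs, abs_of_nonneg (by positivity),
                abs_of_nonneg (by positivity)]
              exact mul_le_of_le_one_right (by positivity) h2
          apply htar.congr
          refine (ae_restrict_iff' measurableSet_Ioi).mpr (ae_of_all _ fun t ht => ?_)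
          simp only [mem_Ioi] at ht
          simp only []
          rw [← hval t ht.le]
          refine integral_congr_ae (ae_of_all _ fun u => ?_)
          simp only [Real.norm_eq_abs]
          exact (abs_of_nonneg (by positivity)).symm
      -- Fubini
      have swap := integral_integral_swap (μ := volume.restrict (Ioi 0)) (ν := volume)
        (f := fun t u => s * Real.exp (-((s + u ^ 2) * t)) *
          ((Real.sqrt (2 * π))⁻¹ * Real.exp (-(u ^ 2) / 2))) hFint
      have hΦval : Φ (-Real.sqrt s)
          = (Real.sqrt (2 * π))⁻¹ * ∫ w in Ioi (Real.sqrt s), Real.exp (-(w ^ 2) / 2) := by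
        rw [hΦ, ← integral_comp_neg_Ioi]
        simp only [neg_sq]
        rw [integral_const_mul]
      calc ∫ u : ℝ, s / (s + u ^ 2) * ((Real.sqrt (2 * π))⁻¹ * Real.exp (-(u ^ 2) / 2))
          = ∫ u : ℝ, ∫ t in Ioi (0:ℝ), s * Real.exp (-((s + u ^ 2) * t)) *
              ((Real.sqrt (2 * π))⁻¹ * Real.exp (-(u ^ 2) / 2)) :=
            integral_congr_ae (ae_of_all _ key)
        _ = ∫ t in Ioi (0:ℝ), ∫ u : ℝ, s * Real.exp (-((s + u ^ 2) * t)) *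
              ((Real.sqrt (2 * π))⁻¹ * Real.exp (-(u ^ 2) / 2)) := swap.symm
        _ = ∫ t in Ioi (0:ℝ), s * Real.exp (-(s * t)) * (Real.sqrt (2 * t + 1))⁻¹ := by
            refine setIntegral_congr_fun measurableSet_Ioi (fun t ht => ?_)
            exact hval t (le_of_lt ht)
        _ = ∫ v in Ioi (1:ℝ), s * Real.exp (s / 2) * Real.exp (-(s / 2 * v ^ 2)) := aux_sub1 hs
        _ = s * Real.exp (s / 2) * ((Real.sqrt s)⁻¹ *
              ∫ w in Ioi (Real.sqrt s), Real.exp (-(w ^ 2) / 2)) := by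
            rw [integral_const_mul, aux_sub2 hs]
        _ = Real.sqrt (2 * π * s) * Real.exp (s / 2) * Φ (-Real.sqrt s) := by
            rw [hΦval, Real.sqrt_mul (by positivity) s]
            have h3 : Real.sqrt (2 * π) ≠ 0 := (Real.sqrt_pos.mpr (by positivity)).ne'
            rw [show Real.sqrt (2 * π) * Real.sqrt s * Real.exp (s / 2) *
                  ((Real.sqrt (2 * π))⁻¹ * ∫ w in Ioi (Real.sqrt s), Real.exp (-(w ^ 2) / 2))
                = (Real.sqrt (2 * π) * (Real.sqrt (2 * π))⁻¹) * (Real.sqrt s * Real.exp (s / 2) *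
                  ∫ w in Ioi (Real.sqrt s), Real.exp (-(w ^ 2) / 2)) by ring,
              mul_inv_cancel₀ h3, one_mul,
              show s * Real.exp (s / 2) * ((Real.sqrt s)⁻¹ *
                  ∫ w in Ioi (Real.sqrt s), Real.exp (-(w ^ 2) / 2))
                = (s / Real.sqrt s) * (Real.exp (s / 2) *
                  ∫ w in Ioi (Real.sqrt s), Real.exp (-(w ^ 2) / 2)) by ring,
              Real.div_sqrt]
            ring
  rw [hB]
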